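/- Let N ≥ 1 and m ≥ 1, let M₀, M₁, …, M_m be N×N complex Hermitian matrices, and let v, v' ∈ ℂ^N be nonzero vectors. Suppose there exist μ, μ' ∈ ℝ^m such that H := M₀ + Σ_{j=1}^m μ_j M_j and H' := M₀ + Σ_{j=1}^m μ'_j M_j are both positive semidefinite, H v = 0 with ker(x ↦ H x) = span{v}, and H' v' = 0 with ker(x ↦ H' x) = span{v'}. Assume that v'* M_j v' = v* M_j v for all j = 1,…,m and that v* M_{j₀} v ≠ 0 for at least one index j₀. Then v' v'* = v v*, and consequently v' = c v for some complex scalar c with |c| = 1. In particular, the power flow solution satisfying the dual-certificate (angle) conditions is unique up to a global phase. -/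

import Mathlib

open Matrix ComplexOrder

theorem stmt_1 (N m : ℕ) (hN : 1 ≤ N) (hm : 1 ≤ m)
    (M₀ : Matrix (Fin N) (Fin N) ℂ) (M : Fin m → Matrix (Fin N) (Fin N) ℂ)
    (hM₀ : M₀.IsHermitian) (hM : ∀ j, (M j).IsHermitian)
    (v v' : Fin N → ℂ) (hv : v ≠ 0) (hv' : v' ≠ 0)
    (μ μ' : Fin m → ℝ)
    (hPSD : (M₀ + ∑ j, (μ j : ℂ) • M j).PosSemidef)
    (hPSD' : (M₀ + ∑ j, (μ' j : ℂ) • M j).PosSemidef)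
    (hHv : (M₀ + ∑ j, (μ j : ℂ) • M j) *ᵥ v = 0)
    (hker : ∀ x : Fin N → ℂ,
      (M₀ + ∑ j, (μ j : ℂ) • M j) *ᵥ x = 0 ↔ ∃ c : ℂ, x = c • v)
    (hHv' : (M₀ + ∑ j, (μ' j : ℂ) • M j) *ᵥ v' = 0)
    (hker' : ∀ x : Fin N → ℂ,
      (M₀ + ∑ j, (μ' j : ℂ) • M j) *ᵥ x = 0 ↔ ∃ c : ℂ, x = c • v')
    (hmeas : ∀ j, star v' ⬝ᵥ (M j *ᵥ v') = star v ⬝ᵥ (M j *ᵥ v))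
    (j₀ : Fin m) (hj₀ : star v ⬝ᵥ (M j₀ *ᵥ v) ≠ 0) :
    vecMulVec v' (star v') = vecMulVec v (star v) ∧
      ∃ c : ℂ, ‖c‖ = 1 ∧ v' = c • v := by
  set H := M₀ + ∑ j, (μ j : ℂ) • M j with hH
  set H' := M₀ + ∑ j, (μ' j : ℂ) • M j with hH'
  have expand : ∀ (ν : Fin m → ℝ) (x : Fin N → ℂ),
      star x ⬝ᵥ ((M₀ + ∑ j, (ν j : ℂ) • M j) *ᵥ x) =
        star x ⬝ᵥ (M₀ *ᵥ x) + ∑ j, (ν j : ℂ) * (star x ⬝ᵥ (M j *ᵥ x)) := by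
    intro ν x
    have sumMv : (∑ j, ((ν j : ℂ) • M j)) *ᵥ x = ∑ j, ((ν j : ℂ) • M j) *ᵥ x :=
      map_sum (AddMonoidHom.mk' (fun A : Matrix (Fin N) (Fin N) ℂ => A *ᵥ x)
        fun A B => Matrix.add_mulVec A B x) _ _
    have dps : star x ⬝ᵥ (∑ j, ((ν j : ℂ) • M j) *ᵥ x) = ∑ j, star x ⬝ᵥ (((ν j : ℂ) • M j) *ᵥ x) :=
      map_sum (AddMonoidHom.mk' (fun y : Fin N → ℂ => star x ⬝ᵥ y)
        fun y z => dotProduct_add (star x) y z) _ _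
    rw [add_mulVec, dotProduct_add, sumMv, dps]
    congr 1
    refine Finset.sum_congr rfl fun j _ => ?_
    rw [smul_mulVec, dotProduct_smul, smul_eq_mul]
  have h0 : star v ⬝ᵥ (H *ᵥ v) = 0 := by rw [hHv, dotProduct_zero]
  have h0' : star v' ⬝ᵥ (H' *ᵥ v') = 0 := by rw [hHv', dotProduct_zero]
  have e1 := expand μ v'
  have e2 := expand μ' v'
  have e3 := expand μ' v
  have e4 := expand μ v
  rw [← hH] at e1 e4; rw [← hH'] at e2 e3
  simp only [hmeas] at e1 e2
  have hs : star v' ⬝ᵥ (H *ᵥ v') = ∑ j, ((μ j : ℂ) - (μ' j : ℂ)) * (star v ⬝ᵥ (M j *ᵥ v)) := by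
    rw [e2] at h0'
    rw [e1]
    have hM0 : star v' ⬝ᵥ (M₀ *ᵥ v') = -∑ j, (μ' j : ℂ) * (star v ⬝ᵥ (M j *ᵥ v)) := by
      linear_combination h0'
    rw [hM0, neg_add_eq_sub, ← Finset.sum_sub_distrib]
    exact Finset.sum_congr rfl fun j _ => by ring
  have ht : star v ⬝ᵥ (H' *ᵥ v) = ∑ j, ((μ' j : ℂ) - (μ j : ℂ)) * (star v ⬝ᵥ (M j *ᵥ v)) := by
    rw [e4] at h0
    rw [e3]
    have hM0 : star v ⬝ᵥ (M₀ *ᵥ v) = -∑ j, (μ j : ℂ) * (star v ⬝ᵥ (M j *ᵥ v)) := by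
      linear_combination h0
    rw [hM0, neg_add_eq_sub, ← Finset.sum_sub_distrib]
    exact Finset.sum_congr rfl fun j _ => by ring
  have hsum : star v' ⬝ᵥ (H *ᵥ v') + star v ⬝ᵥ (H' *ᵥ v) = 0 := by
    rw [hs, ht, ← Finset.sum_add_distrib]
    refine Finset.sum_eq_zero fun j _ => by ring
  have hge1 : 0 ≤ star v' ⬝ᵥ (H *ᵥ v') := hPSD.dotProduct_mulVec_nonneg v'
  have hge2 : 0 ≤ star v ⬝ᵥ (H' *ᵥ v) := hPSD'.dotProduct_mulVec_nonneg v
  have hz : star v' ⬝ᵥ (H *ᵥ v') = 0 :=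
    ((add_eq_zero_iff_of_nonneg hge1 hge2).mp hsum).1
  have hker0 : H *ᵥ v' = 0 := (hPSD.dotProduct_mulVec_zero_iff v').mp hz
  obtain ⟨c, hc⟩ := (hker v').mp hker0
  have hcc : star c * c = 1 := by
    have hj := hmeas j₀
    rw [hc] at hj
    have h2 : star (c • v) ⬝ᵥ (M j₀ *ᵥ (c • v)) = (star c * c) * (star v ⬝ᵥ (M j₀ *ᵥ v)) := by
      rw [mulVec_smul, dotProduct_smul, star_smul, smul_dotProduct]
      simp only [smul_eq_mul]; ring
    rw [h2] at hj
    have h3 : (star c * c - 1) * (star v ⬝ᵥ (M j₀ *ᵥ v)) = 0 := by linear_combination hj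
    rcases mul_eq_zero.mp h3 with h | h
    · exact sub_eq_zero.mp h
    · exact absurd h hj₀
  have hnsq : Complex.normSq c = 1 := by
    have : ((Complex.normSq c : ℂ)) = 1 := by
      have hcc2 : (starRingEnd ℂ) c * c = 1 := hcc
      rw [← Complex.normSq_eq_conj_mul_self] at hcc2
      exact_mod_cast hcc2
    exact_mod_cast this
  have habs : ‖c‖ = 1 := by
    have h1 : ‖c‖ ^ 2 = 1 := by rw [Complex.sq_norm, hnsq]
    nlinarith [norm_nonneg c]
  refine ⟨?_, c, habs, hc⟩
  rw [hc]
  ext i k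
  simp only [vecMulVec_apply, Pi.smul_apply, Pi.star_apply, star_smul, smul_eq_mul]
  calc c * v i * (star c * star (v k)) = (star c * c) * (v i * star (v k)) := by ring
    _ = v i * star (v k) := by rw [hcc, one_mul]
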